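/- Entropy-Splitting Lemma (non-smooth case, m = 2): Let X₁, X₂ and Z be random variables on a finite probability space such that ∑_z max_{x₁,x₂} P[X₁ = x₁, X₂ = x₂, Z = z] ≤ 2^{−α}. Define the random variable V with values in {1,2} by: V = 1 if P[X₁ = x₁ | Z = z] ≥ 2^{−α/2} (where (x₁, z) are the realized values), and V = 2 otherwise. Then for each j ∈ {1,2} and i ≠ j it holds that ∑_z max_{x_i} P[X_i = x_i, V = j, Z = z] ≤ 2^{−α/2}. -/

import Mathlib

open Finset

/-- Entropy-splitting lemma (non-smooth case, `m = 2`): if the pair `(X₁,X₂)` has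
min-entropy at least `α` given `Z`, and `V ∈ {0,1}` indicates whether `X₁` is "heavy"
given `Z` (i.e. `P[X₁ = x₁ | Z = z] ≥ 2^{-α/2}` for the realized values), then for
`j ∈ {0,1}` and `i ≠ j`, the variable `X_i` has min-entropy at least `α/2` jointly
with the event `V = j`, given `Z`. -/
theorem entropy_splitting_two
    {Ω 𝒳₁ 𝒳₂ 𝒵 : Type*} [Fintype Ω] [Fintype 𝒳₁] [Fintype 𝒳₂] [Fintype 𝒵]
    [Nonempty 𝒳₁] [Nonempty 𝒳₂] [DecidableEq 𝒳₁] [DecidableEq 𝒳₂] [DecidableEq 𝒵]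
    (p : Ω → ℝ) (hp : ∀ ω, 0 ≤ p ω) (hsum : ∑ ω, p ω = 1)
    (X₁ : Ω → 𝒳₁) (X₂ : Ω → 𝒳₂) (Z : Ω → 𝒵) (α : ℝ)
    (hα : ∑ z, (univ : Finset (𝒳₁ × 𝒳₂)).sup' univ_nonempty (fun xx =>
        ∑ ω ∈ univ.filter (fun ω => X₁ ω = xx.1 ∧ X₂ ω = xx.2 ∧ Z ω = z), p ω)
        ≤ (2:ℝ) ^ (-α))
    (V : Ω → Fin 2)
    (hV : ∀ ω, V ω = 0 ↔
      (2:ℝ) ^ (-α/2) * (∑ ω' ∈ univ.filter (fun ω' => Z ω' = Z ω), p ω')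
        ≤ ∑ ω' ∈ univ.filter (fun ω' => X₁ ω' = X₁ ω ∧ Z ω' = Z ω), p ω') :
    (∑ z, (univ : Finset 𝒳₂).sup' univ_nonempty (fun x₂ =>
        ∑ ω ∈ univ.filter (fun ω => X₂ ω = x₂ ∧ V ω = 0 ∧ Z ω = z), p ω)
      ≤ (2:ℝ) ^ (-α/2))
    ∧ (∑ z, (univ : Finset 𝒳₁).sup' univ_nonempty (fun x₁ =>
        ∑ ω ∈ univ.filter (fun ω => X₁ ω = x₁ ∧ V ω = 1 ∧ Z ω = z), p ω)
      ≤ (2:ℝ) ^ (-α/2)) :=   by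
  classical
  have hPz_nonneg : ∀ z : 𝒵, (0:ℝ) ≤ ∑ ω ∈ univ.filter (fun ω => Z ω = z), p ω :=
    fun z => Finset.sum_nonneg fun ω _ => hp ω
  have hPz_sum : ∑ z : 𝒵, ∑ ω ∈ univ.filter (fun ω => Z ω = z), p ω = 1 := by
    rw [← hsum]
    exact Finset.sum_fiberwise _ _ _
  have hpow_nonneg : ∀ t : ℝ, (0:ℝ) ≤ (2:ℝ) ^ t := fun t => (Real.rpow_pos_of_pos two_pos t).le
  -- the per-z max over pairs
  have hM_nonneg : ∀ z : 𝒵, (0:ℝ) ≤ (univ : Finset (𝒳₁ × 𝒳₂)).sup' univ_nonempty (fun xx =>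
      ∑ ω ∈ univ.filter (fun ω => X₁ ω = xx.1 ∧ X₂ ω = xx.2 ∧ Z ω = z), p ω) := by
    intro z
    refine le_trans (Finset.sum_nonneg fun ω _ => hp ω)
      (Finset.le_sup' (f := fun xx : 𝒳₁ × 𝒳₂ =>
        ∑ ω ∈ univ.filter (fun ω => X₁ ω = xx.1 ∧ X₂ ω = xx.2 ∧ Z ω = z), p ω)
        (Finset.mem_univ (Classical.arbitrary (𝒳₁ × 𝒳₂))))
  constructor
  · -- Part 1 : V = 0, bound on X₂
    have key : ∀ (z : 𝒵) (x₂ : 𝒳₂),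
        ∑ ω ∈ univ.filter (fun ω => X₂ ω = x₂ ∧ V ω = 0 ∧ Z ω = z), p ω
        ≤ (2:ℝ) ^ (α/2) * (univ : Finset (𝒳₁ × 𝒳₂)).sup' univ_nonempty (fun xx =>
            ∑ ω ∈ univ.filter (fun ω => X₁ ω = xx.1 ∧ X₂ ω = xx.2 ∧ Z ω = z), p ω) := by
      intro z x₂
      by_cases hz0 : ∑ ω ∈ univ.filter (fun ω => Z ω = z), p ω = 0
      · have h0 : ∑ ω ∈ univ.filter (fun ω => X₂ ω = x₂ ∧ V ω = 0 ∧ Z ω = z), p ω ≤ 0 := by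
          rw [← hz0]
          apply Finset.sum_le_sum_of_subset_of_nonneg
          · intro ω hω; simp only [Finset.mem_filter] at *; tauto
          · intro ω _ _; exact hp ω
        exact le_trans h0 (mul_nonneg (hpow_nonneg _) (hM_nonneg z))
      · have hzpos : 0 < ∑ ω ∈ univ.filter (fun ω => Z ω = z), p ω :=
          lt_of_le_of_ne (hPz_nonneg z) (Ne.symm hz0)
        -- heavy set
        set H : Finset 𝒳₁ := univ.filter (fun x₁ =>
          (2:ℝ) ^ (-α/2) * (∑ ω ∈ univ.filter (fun ω => Z ω = z), p ω)
            ≤ ∑ ω ∈ univ.filter (fun ω => X₁ ω = x₁ ∧ Z ω = z), p ω) with hH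
        set M : ℝ := (univ : Finset (𝒳₁ × 𝒳₂)).sup' univ_nonempty (fun xx =>
            ∑ ω ∈ univ.filter (fun ω => X₁ ω = xx.1 ∧ X₂ ω = xx.2 ∧ Z ω = z), p ω) with hMdef
        have hfib : ∑ ω ∈ univ.filter (fun ω => X₂ ω = x₂ ∧ V ω = 0 ∧ Z ω = z), p ω
            = ∑ x₁ : 𝒳₁, ∑ ω ∈ (univ.filter (fun ω => X₂ ω = x₂ ∧ V ω = 0 ∧ Z ω = z)).filter
                (fun ω => X₁ ω = x₁), p ω :=
          (Finset.sum_fiberwise _ _ _).symm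
        have hzero : ∀ x₁ ∉ H,
            ∑ ω ∈ (univ.filter (fun ω => X₂ ω = x₂ ∧ V ω = 0 ∧ Z ω = z)).filter
                (fun ω => X₁ ω = x₁), p ω = 0 := by
          intro x₁ hx₁
          apply Finset.sum_eq_zero
          intro ω hω
          simp only [Finset.mem_filter, Finset.mem_univ, true_and] at hω
          obtain ⟨⟨hx2, hv, hz⟩, hx1⟩ := hω
          exfalso
          apply hx₁
          rw [hH, Finset.mem_filter]
          refine ⟨Finset.mem_univ _, ?_⟩
          have := (hV ω).mp hv
          rwa [hx1, hz] at this
        have hle : ∀ x₁ : 𝒳₁,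
            ∑ ω ∈ (univ.filter (fun ω => X₂ ω = x₂ ∧ V ω = 0 ∧ Z ω = z)).filter
                (fun ω => X₁ ω = x₁), p ω ≤ M := by
          intro x₁
          refine le_trans ?_ (Finset.le_sup' (f := fun xx : 𝒳₁ × 𝒳₂ =>
            ∑ ω ∈ univ.filter (fun ω => X₁ ω = xx.1 ∧ X₂ ω = xx.2 ∧ Z ω = z), p ω)
            (Finset.mem_univ (x₁, x₂)))
          apply Finset.sum_le_sum_of_subset_of_nonneg
          · intro ω hω; simp only [Finset.mem_filter, Finset.mem_univ, true_and] at *; tauto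
          · intro ω _ _; exact hp ω
        have hcard : (H.card : ℝ) ≤ (2:ℝ) ^ (α/2) := by
          have h1 : (H.card : ℝ) * ((2:ℝ) ^ (-α/2) * (∑ ω ∈ univ.filter (fun ω => Z ω = z), p ω))
              ≤ ∑ x₁ ∈ H, ∑ ω ∈ univ.filter (fun ω => X₁ ω = x₁ ∧ Z ω = z), p ω := by
            rw [← nsmul_eq_mul]
            apply Finset.card_nsmul_le_sum
            intro x₁ hx₁
            rw [hH, Finset.mem_filter] at hx₁
            exact hx₁.2
          have h2 : ∑ x₁ ∈ H, ∑ ω ∈ univ.filter (fun ω => X₁ ω = x₁ ∧ Z ω = z), p ω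
              ≤ ∑ ω ∈ univ.filter (fun ω => Z ω = z), p ω := by
            have h3 : ∑ x₁ : 𝒳₁, ∑ ω ∈ univ.filter (fun ω => X₁ ω = x₁ ∧ Z ω = z), p ω
                = ∑ ω ∈ univ.filter (fun ω => Z ω = z), p ω := by
              rw [← Finset.sum_fiberwise (univ.filter (fun ω => Z ω = z)) X₁ p]
              congr 1
              ext x₁
              rw [Finset.filter_filter]
              congr 1
              ext ω
              simp only [Finset.mem_filter]
              tauto
            rw [← h3]
            apply Finset.sum_le_sum_of_subset_of_nonneg (Finset.subset_univ _)
            intro x₁ _ _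
            exact Finset.sum_nonneg fun ω _ => hp ω
          have h4 : (H.card : ℝ) * ((2:ℝ) ^ (-α/2) * (∑ ω ∈ univ.filter (fun ω => Z ω = z), p ω))
              ≤ ∑ ω ∈ univ.filter (fun ω => Z ω = z), p ω := le_trans h1 h2
          have hc : 0 < (2:ℝ) ^ (-α/2) * (∑ ω ∈ univ.filter (fun ω => Z ω = z), p ω) :=
            mul_pos (Real.rpow_pos_of_pos two_pos _) hzpos
          rw [← le_div_iff₀ hc] at h4
          refine le_trans h4 (le_of_eq ?_)
          rw [div_mul_eq_div_div_swap, div_self (ne_of_gt hzpos)]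
          rw [one_div, ← Real.rpow_neg (by norm_num : (0:ℝ) ≤ 2)]
          congr 1
          ring
        calc ∑ ω ∈ univ.filter (fun ω => X₂ ω = x₂ ∧ V ω = 0 ∧ Z ω = z), p ω
            = ∑ x₁ ∈ H, ∑ ω ∈ (univ.filter (fun ω => X₂ ω = x₂ ∧ V ω = 0 ∧ Z ω = z)).filter
                (fun ω => X₁ ω = x₁), p ω := by
              rw [hfib]
              exact (Finset.sum_subset (Finset.subset_univ H)
                (fun x₁ _ hx₁ => hzero x₁ hx₁)).symm
          _ ≤ ∑ _x₁ ∈ H, M := Finset.sum_le_sum fun x₁ _ => hle x₁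
          _ = (H.card : ℝ) * M := by rw [Finset.sum_const, nsmul_eq_mul]
          _ ≤ (2:ℝ) ^ (α/2) * M := by
              apply mul_le_mul_of_nonneg_right hcard (hM_nonneg z)
    calc ∑ z, (univ : Finset 𝒳₂).sup' univ_nonempty (fun x₂ =>
          ∑ ω ∈ univ.filter (fun ω => X₂ ω = x₂ ∧ V ω = 0 ∧ Z ω = z), p ω)
        ≤ ∑ z, (2:ℝ) ^ (α/2) * (univ : Finset (𝒳₁ × 𝒳₂)).sup' univ_nonempty (fun xx =>
            ∑ ω ∈ univ.filter (fun ω => X₁ ω = xx.1 ∧ X₂ ω = xx.2 ∧ Z ω = z), p ω) :=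
          Finset.sum_le_sum fun z _ => Finset.sup'_le _ _ fun x₂ _ => key z x₂
      _ = (2:ℝ) ^ (α/2) * ∑ z, (univ : Finset (𝒳₁ × 𝒳₂)).sup' univ_nonempty (fun xx =>
            ∑ ω ∈ univ.filter (fun ω => X₁ ω = xx.1 ∧ X₂ ω = xx.2 ∧ Z ω = z), p ω) := by
          rw [Finset.mul_sum]
      _ ≤ (2:ℝ) ^ (α/2) * (2:ℝ) ^ (-α) :=
          mul_le_mul_of_nonneg_left hα (hpow_nonneg _)
      _ = (2:ℝ) ^ (-α/2) := by
          rw [← Real.rpow_add two_pos]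
          ring_nf
  · -- Part 2 : V = 1, bound on X₁
    have key : ∀ (z : 𝒵) (x₁ : 𝒳₁),
        ∑ ω ∈ univ.filter (fun ω => X₁ ω = x₁ ∧ V ω = 1 ∧ Z ω = z), p ω
        ≤ (2:ℝ) ^ (-α/2) * ∑ ω ∈ univ.filter (fun ω => Z ω = z), p ω := by
      intro z x₁
      rcases (univ.filter (fun ω => X₁ ω = x₁ ∧ V ω = 1 ∧ Z ω = z)).eq_empty_or_nonempty with
        h | ⟨ω₀, hω₀⟩
      · rw [h, Finset.sum_empty]
        exact mul_nonneg (hpow_nonneg _) (hPz_nonneg z)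
      · simp only [Finset.mem_filter, Finset.mem_univ, true_and] at hω₀
        obtain ⟨hx, hv, hz⟩ := hω₀
        have hnot : ¬ (V ω₀ = 0) := by simp [hv]
        rw [hV ω₀] at hnot
        push_neg at hnot
        rw [hx, hz] at hnot
        calc ∑ ω ∈ univ.filter (fun ω => X₁ ω = x₁ ∧ V ω = 1 ∧ Z ω = z), p ω
            ≤ ∑ ω ∈ univ.filter (fun ω => X₁ ω = x₁ ∧ Z ω = z), p ω := by
              apply Finset.sum_le_sum_of_subset_of_nonneg
              · intro ω hω; simp only [Finset.mem_filter] at *; tauto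
              · intro ω _ _; exact hp ω
          _ ≤ (2:ℝ) ^ (-α/2) * ∑ ω ∈ univ.filter (fun ω => Z ω = z), p ω := le_of_lt hnot
    calc ∑ z, (univ : Finset 𝒳₁).sup' univ_nonempty (fun x₁ =>
          ∑ ω ∈ univ.filter (fun ω => X₁ ω = x₁ ∧ V ω = 1 ∧ Z ω = z), p ω)
        ≤ ∑ z, (2:ℝ) ^ (-α/2) * ∑ ω ∈ univ.filter (fun ω => Z ω = z), p ω :=
          Finset.sum_le_sum fun z _ => Finset.sup'_le _ _ fun x₁ _ => key z x₁
      _ = (2:ℝ) ^ (-α/2) := by rw [← Finset.mul_sum, hPz_sum, mul_one]
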